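/- Let ρ, σ, γ be density operators on finite-dimensional Hilbert spaces, with γ = Σ_i γ_i |i⟩⟨i| diagonal. Then for all x ∈ [0,1] and each index i, β_x(ρ ⊗ |i⟩⟨i| ‖ σ ⊗ γ) = γ_i · β_x(ρ‖σ). -/

import Mathlib

open Matrix Filter
open scoped Matrix ComplexOrder

variable {n : Type*} [Fintype n] [DecidableEq n]

/-- `ρ` is a density operator: positive semidefinite with unit trace. -/
def IsDensity (ρ : Matrix n n ℂ) : Prop := ρ.PosSemidef ∧ ρ.trace = 1

/-- Optimal type-II error `β_x(ρ‖σ)` in binary quantum hypothesis testing: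
the minimum of `Tr(σQ)` over tests `0 ≤ Q ≤ 1` with `Tr(ρQ) ≥ 1 − x`. -/
noncomputable def betaErr (x : ℝ) (ρ σ : Matrix n n ℂ) : ℝ :=
  sInf {v : ℝ | ∃ Q : Matrix n n ℂ, Q.PosSemidef ∧ (1 - Q).PosSemidef ∧
    1 - x ≤ ((ρ * Q).trace).re ∧ v = ((σ * Q).trace).re}

open Classical in
/-- Real power of a Hermitian matrix via the spectral decomposition. -/
noncomputable def hrpow (A : Matrix n n ℂ) (α : ℝ) : Matrix n n ℂ :=
  if h : A.IsHermitian then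
    (h.eigenvectorUnitary : Matrix n n ℂ) *
      Matrix.diagonal (fun i => ((h.eigenvalues i ^ α : ℝ) : ℂ)) *
      star (h.eigenvectorUnitary : Matrix n n ℂ)
  else A

open Classical in
/-- Minimal eigenvalue of a Hermitian matrix. -/
noncomputable def lamMin (A : Matrix n n ℂ) : ℝ :=
  if h : A.IsHermitian then ⨅ i, h.eigenvalues i else 0

open Classical in
/-- Maximal eigenvalue of a Hermitian matrix. -/
noncomputable def lamMax (A : Matrix n n ℂ) : ℝ :=
  if h : A.IsHermitian then ⨆ i, h.eigenvalues i else 0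

open Classical in
/-- Pinching map `P_σ(X)` with respect to the eigenspaces of `σ`:
in the eigenbasis of `σ`, off-diagonal blocks between distinct eigenvalues are erased. -/
noncomputable def pinch (σ X : Matrix n n ℂ) : Matrix n n ℂ :=
  if h : σ.IsHermitian then
    (h.eigenvectorUnitary : Matrix n n ℂ) *
      (Matrix.of fun i j =>
        if h.eigenvalues i = h.eigenvalues j then
          (star (h.eigenvectorUnitary : Matrix n n ℂ) * X *
            (h.eigenvectorUnitary : Matrix n n ℂ)) i j
        else 0) *
      star (h.eigenvectorUnitary : Matrix n n ℂ)
  else X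

/-- Trace distance `T(A,B) = (1/2)‖A − B‖₁`. -/
noncomputable def traceDist (A B : Matrix n n ℂ) : ℝ :=
  (1 / 2) * ((((Matrix.posSemidef_conjTranspose_mul_self (A - B)).1.eigenvectorUnitary : Matrix n n ℂ) *
      Matrix.diagonal (((↑) : ℝ → ℂ) ∘ (√·) ∘ (Matrix.posSemidef_conjTranspose_mul_self (A - B)).1.eigenvalues) *
      (star (Matrix.posSemidef_conjTranspose_mul_self (A - B)).1.eigenvectorUnitary : Matrix n n ℂ)).trace).re

/-- `n`-fold tensor (Kronecker) power of a matrix. -/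
noncomputable def tensorPow {d : ℕ} (ρ : Matrix (Fin d) (Fin d) ℂ) (m : ℕ) :
    Matrix (Fin m → Fin d) (Fin m → Fin d) ℂ :=
  fun f g => ∏ i, ρ (f i) (g i)

/-- A quantum channel from a `d₁`- to a `d₂`-dimensional system, presented by
Kraus operators (equivalently, a completely positive trace-preserving map). -/
structure QChannel (d₁ d₂ : ℕ) where
  k : ℕ
  K : Fin k → Matrix (Fin d₂) (Fin d₁) ℂ
  tp : ∑ i, (K i)ᴴ * K i = 1

/-- Action of a quantum channel on a matrix. -/
noncomputable def QChannel.apply {d₁ d₂ : ℕ} (E : QChannel d₁ d₂)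
    (X : Matrix (Fin d₁) (Fin d₁) ℂ) : Matrix (Fin d₂) (Fin d₂) ℂ :=
  ∑ i, E.K i * X * (E.K i)ᴴ

/-- Classical Rényi relative entropy of a (commuting) pair of matrices,
`D_α(A‖B) = (1/(α−1)) ln Tr(A^α B^{1−α})`. -/
noncomputable def renyiDiv (α : ℝ) (A B : Matrix n n ℂ) : ℝ :=
  (α - 1)⁻¹ * Real.log (((hrpow A α * hrpow B (1 - α)).trace).re)

/-- Minimal (sandwiched) Rényi relative entropy, `α ≤ 1/2` branch:
`D̃_α(ρ‖σ) = (1/(α−1)) ln Tr((√σ ρ^{α/(1−α)} √σ)^{1−α})`. -/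
noncomputable def minRenyiDiv (α : ℝ) (ρ σ : Matrix n n ℂ) : ℝ :=
  (α - 1)⁻¹ * Real.log
    (((hrpow (hrpow σ (1 / 2) * hrpow ρ (α / (1 - α)) * hrpow σ (1 / 2)) (1 - α)).trace).re)

section Helpers
open scoped Kronecker Pointwise
variable {N M : Type*} [Fintype N] [Fintype M] [DecidableEq N] [DecidableEq M]

lemma kron_conjTranspose' (A : Matrix N N ℂ) (B : Matrix M M ℂ) :
    (A ⊗ₖ B)ᴴ = Aᴴ ⊗ₖ Bᴴ := by
  ext ⟨a, j⟩ ⟨b, k⟩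
  simp [conjTranspose_apply, kroneckerMap_apply, mul_comm]

open scoped MatrixOrder in
lemma posSemidef_iff_eq_transpose_mul_self {A : Matrix N N ℂ} :
    A.PosSemidef ↔ ∃ B : Matrix N N ℂ, A = Bᴴ * B := by
  constructor
  · intro hA
    obtain ⟨B, hB⟩ := CStarAlgebra.nonneg_iff_eq_star_mul_self.mp hA.nonneg
    exact ⟨B, hB⟩
  · rintro ⟨B, rfl⟩
    exact posSemidef_conjTranspose_mul_self B

lemma posSemidef_kron' {A : Matrix N N ℂ} {B : Matrix M M ℂ}
    (hA : A.PosSemidef) (hB : B.PosSemidef) : (A ⊗ₖ B).PosSemidef := by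
  obtain ⟨P, rfl⟩ := posSemidef_iff_eq_transpose_mul_self.mp hA
  obtain ⟨R, rfl⟩ := posSemidef_iff_eq_transpose_mul_self.mp hB
  rw [Matrix.mul_kronecker_mul, ← kron_conjTranspose']
  exact posSemidef_conjTranspose_mul_self _

lemma psd_trace_re_nonneg' {A : Matrix N N ℂ} (hA : A.PosSemidef) : 0 ≤ A.trace.re := by
  have h : ∀ i, 0 ≤ A i i := by
    intro i
    exact hA.diag_nonneg
  have : (0 : ℂ) ≤ A.trace := Finset.sum_nonneg fun i _ => h i
  exact (Complex.le_def.mp this).1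

lemma trace_mul_psd_re_nonneg' {A B : Matrix N N ℂ} (hA : A.PosSemidef) (hB : B.PosSemidef) :
    0 ≤ ((A * B).trace).re := by
  obtain ⟨P, rfl⟩ := posSemidef_iff_eq_transpose_mul_self.mp hA
  have h : (Pᴴ * P * B).trace = (P * B * Pᴴ).trace := by
    rw [Matrix.mul_assoc, Matrix.trace_mul_comm, Matrix.mul_assoc]
  rw [h]
  exact psd_trace_re_nonneg' (hB.mul_mul_conjTranspose_same P)

lemma kron_diag_mul_trace' {d m : ℕ} (A : Matrix (Fin d) (Fin d) ℂ) (w : Fin m → ℂ)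
    (Q : Matrix (Fin d × Fin m) (Fin d × Fin m) ℂ) :
    ((A ⊗ₖ Matrix.diagonal w) * Q).trace
      = ∑ j, w j * (A * Q.submatrix (fun a => (a, j)) (fun a => (a, j))).trace := by
  simp only [Matrix.trace, Matrix.diag, Matrix.mul_apply, Matrix.kroneckerMap_apply,
    Matrix.submatrix_apply, Matrix.diagonal_apply, Fintype.sum_prod_type, ite_mul, zero_mul,
    mul_ite, mul_zero, Finset.sum_ite_eq, Finset.mem_univ, if_true, Finset.mul_sum]
  rw [Finset.sum_comm]
  congr 1; ext j
  rw [Finset.sum_comm]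
  rw [Finset.sum_comm]
  congr 1; ext a
  congr 1; ext b
  ring

end Helpers

open scoped Pointwise in
open Kronecker in
/-- Hypothesis testing against a product with a diagonal ancilla:
`β_x(ρ ⊗ |i⟩⟨i| ‖ σ ⊗ γ) = γ_i · β_x(ρ‖σ)`. -/
theorem betaErr_kronecker_diagonal {d m : ℕ} (ρ σ : Matrix (Fin d) (Fin d) ℂ)
    (hρ : IsDensity ρ) (hσ : IsDensity σ)
    (g : Fin m → ℝ) (hg : ∀ i, 0 ≤ g i) (hgs : ∑ i, g i = 1)
    (x : ℝ) (hx : x ∈ Set.Icc (0 : ℝ) 1) (i : Fin m) :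
    betaErr x (ρ ⊗ₖ Matrix.single i i (1 : ℂ))
        (σ ⊗ₖ Matrix.diagonal fun j => (g j : ℂ)) = g i * betaErr x ρ σ := by
  obtain ⟨hx0, hx1⟩ := hx
  classical
  set e : Fin m → ℂ := fun j => if j = i then 1 else 0 with he
  have hEdiag : Matrix.single i i (1 : ℂ) = Matrix.diagonal e := by
    ext a b
    by_cases hab : a = b <;> by_cases hai : a = i <;>
      simp_all [Matrix.single, Matrix.diagonal_apply, he] <;> aesop
  have hEpsd : (Matrix.diagonal e).PosSemidef :=
    .diagonal (fun j => by by_cases h : j = i <;> simp [he, h])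
  have hγpsd : (Matrix.diagonal fun j => (g j : ℂ)).PosSemidef :=
    .diagonal (fun j => Complex.zero_le_real.mpr (hg j))
  let S : Set ℝ := {v | ∃ Q : Matrix (Fin d) (Fin d) ℂ, Q.PosSemidef ∧ (1 - Q).PosSemidef ∧
    1 - x ≤ ((ρ * Q).trace).re ∧ v = ((σ * Q).trace).re}
  let T : Set ℝ := {v | ∃ Q : Matrix (Fin d × Fin m) (Fin d × Fin m) ℂ, Q.PosSemidef ∧
    (1 - Q).PosSemidef ∧
    1 - x ≤ (((ρ ⊗ₖ Matrix.single i i (1 : ℂ)) * Q).trace).re ∧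
    v = (((σ ⊗ₖ Matrix.diagonal fun j => (g j : ℂ)) * Q).trace).re}
  show sInf T = g i * sInf S
  have hSlb : ∀ v ∈ S, (0 : ℝ) ≤ v := by
    rintro v ⟨Q, hQ, -, -, rfl⟩
    exact trace_mul_psd_re_nonneg' hσ.1 hQ
  have hTlb : ∀ v ∈ T, (0 : ℝ) ≤ v := by
    rintro v ⟨Q, hQ, -, -, rfl⟩
    exact trace_mul_psd_re_nonneg' (posSemidef_kron' hσ.1 hγpsd) hQ
  have hSbdd : BddBelow S := ⟨0, fun v hv => hSlb v hv⟩
  have hSne : S.Nonempty := by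
    refine ⟨(σ.trace).re, 1, Matrix.PosSemidef.one, by rw [sub_self]; exact .zero, ?_, by simp⟩
    rw [Matrix.mul_one, hρ.2]
    simp
    linarith
  have hmap : ∀ v ∈ S, g i * v ∈ T := by
    rintro v ⟨Q, hQ, hQ1, hQρ, rfl⟩
    refine ⟨Q ⊗ₖ Matrix.diagonal e, posSemidef_kron' hQ hEpsd, ?_, ?_, ?_⟩
    · have h1 : (1 : Matrix (Fin d × Fin m) (Fin d × Fin m) ℂ) - Q ⊗ₖ Matrix.diagonal e
          = (1 - Q) ⊗ₖ Matrix.diagonal e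
            + (1 : Matrix (Fin d) (Fin d) ℂ) ⊗ₖ ((1 : Matrix (Fin m) (Fin m) ℂ)
              - Matrix.diagonal e) := by
        ext ⟨a, j⟩ ⟨b, k⟩
        simp only [Matrix.sub_apply, Matrix.add_apply, Matrix.kroneckerMap_apply,
          Matrix.one_apply, Matrix.diagonal_apply, Prod.mk.injEq]
        by_cases hki : k = i <;> split_ifs <;> simp_all <;> ring
      rw [h1]
      have h1E : ((1 : Matrix (Fin m) (Fin m) ℂ) - Matrix.diagonal e).PosSemidef := by
        have h2 : (1 : Matrix (Fin m) (Fin m) ℂ) - Matrix.diagonal e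
            = Matrix.diagonal (fun j => 1 - e j) := by
          rw [← Matrix.diagonal_one, Matrix.diagonal_sub]
        rw [h2]
        exact .diagonal (fun j => by by_cases h : j = i <;> simp [he, h])
      exact (posSemidef_kron' hQ1 hEpsd).add (posSemidef_kron' .one h1E)
    · rw [hEdiag, ← Matrix.mul_kronecker_mul, Matrix.trace_kronecker]
      have h3 : (Matrix.diagonal e * Matrix.diagonal e).trace = 1 := by
        simp [Matrix.diagonal_mul_diagonal, Matrix.trace_diagonal, he, ite_mul, mul_ite,
          Finset.sum_ite_eq']
      rw [h3, mul_one]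
      exact hQρ
    · rw [← Matrix.mul_kronecker_mul, Matrix.trace_kronecker]
      have h4 : ((Matrix.diagonal fun j => (g j : ℂ)) * Matrix.diagonal e).trace = (g i : ℂ) := by
        simp [Matrix.diagonal_mul_diagonal, Matrix.trace_diagonal, he, ite_mul, mul_ite,
          Finset.sum_ite_eq']
      rw [h4, mul_comm ((σ * Q).trace) ((g i : ℂ)), Complex.re_ofReal_mul]
  have hrev : ∀ w ∈ T, ∃ v ∈ S, g i * v ≤ w := by
    rintro w ⟨Q, hQ, hQ1, hQρ, rfl⟩
    set B : Fin m → Matrix (Fin d) (Fin d) ℂ :=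
      fun j => Q.submatrix (fun a => (a, j)) (fun a => (a, j)) with hB
    have hBpsd : ∀ j, (B j).PosSemidef := fun j => hQ.submatrix _
    have hB1 : ((1 : Matrix (Fin d) (Fin d) ℂ) - B i).PosSemidef := by
      have h5 : (1 : Matrix (Fin d) (Fin d) ℂ) - B i
          = (1 - Q).submatrix (fun a => (a, i)) (fun a => (a, i)) := by
        ext a b
        simp [hB, Matrix.one_apply, Prod.ext_iff]
      rw [h5]
      exact hQ1.submatrix _
    have hρtr : (((ρ ⊗ₖ Matrix.single i i (1 : ℂ)) * Q).trace) = (ρ * B i).trace := by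
      rw [hEdiag, kron_diag_mul_trace']
      simp [he, ite_mul, Finset.sum_ite_eq', hB]
    have hσtr : ((((σ ⊗ₖ Matrix.diagonal fun j => (g j : ℂ)) * Q).trace)).re
        = ∑ j, g j * ((σ * B j).trace).re := by
      rw [kron_diag_mul_trace', Complex.re_sum]
      exact Finset.sum_congr rfl fun j _ => Complex.re_ofReal_mul _ _
    rw [hρtr] at hQρ
    refine ⟨((σ * B i).trace).re, ⟨B i, hBpsd i, hB1, hQρ, rfl⟩, ?_⟩
    rw [hσtr]
    exact Finset.single_le_sum (f := fun j => g j * ((σ * B j).trace).re)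
      (fun j _ => mul_nonneg (hg j) (trace_mul_psd_re_nonneg' hσ.1 (hBpsd j)))
      (Finset.mem_univ i)
  obtain ⟨v₀, hv₀⟩ := id hSne
  have hTne : T.Nonempty := ⟨g i * v₀, hmap v₀ hv₀⟩
  refine le_antisymm ?_ ?_
  · have h1 : sInf T ≤ sInf ((fun v => g i * v) '' S) :=
      csInf_le_csInf ⟨0, fun w hw => hTlb w hw⟩ (hSne.image _)
        (by rintro _ ⟨v, hv, rfl⟩; exact hmap v hv)
    have h2 : (fun v => g i * v) '' S = g i • S := by
      ext y
      simp [Set.mem_smul_set, smul_eq_mul, eq_comm]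
    rw [h2, Real.sInf_smul_of_nonneg (hg i), smul_eq_mul] at h1
    exact h1
  · refine le_csInf hTne fun w hw => ?_
    obtain ⟨v, hv, hle⟩ := hrev w hw
    calc g i * sInf S ≤ g i * v := mul_le_mul_of_nonneg_left (csInf_le hSbdd hv) (hg i)
      _ ≤ w := hle
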